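/- If a digital image (Y,κ) is κ-contractible, then for every positive integer m the digital path space Y^{[0,m]_ℤ}, equipped with its function-space adjacency κ_*, is κ_*-contractible. -/

import Mathlib

/-! Basic notions of digital topology (Rosenfeld, Boxer, et al.). -/

/-- Equality-or-adjacency: `u ⟷=_κ v`. -/
def adjEq {α : Type*} (κ : α → α → Prop) (u v : α) : Prop := u = v ∨ κ u v

/-- 2-adjacency (i.e. `c₁`) on `ℤ`. -/
def adjZ (u v : ℤ) : Prop := |u - v| = 1

/-- The `c_l`-adjacency on `ℤ^n`: distinct points, coordinatewise equal or differing by 1,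
with at most `l` coordinates differing by 1. -/
def clAdj (n l : ℕ) (u v : Fin n → ℤ) : Prop :=
  u ≠ v ∧ (∀ k, u k = v k ∨ |u k - v k| = 1) ∧
    (Finset.univ.filter fun j => |u j - v j| = 1).card ≤ l

/-- 4-adjacency (i.e. `c₁`) on `ℤ²`. -/
def adj4 (u v : ℤ × ℤ) : Prop :=
  (u.1 = v.1 ∧ |u.2 - v.2| = 1) ∨ (u.2 = v.2 ∧ |u.1 - v.1| = 1)

/-- The adjacency induced on a subset of a digital image. -/
def subAdj {X : Type*} (μ : X → X → Prop) (V : Set X) : ↥V → ↥V → Prop :=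
  fun u v => μ u.1 v.1

/-- Digital `(κ,λ)`-continuity of a map. -/
def DigCont {α β : Type*} (κ : α → α → Prop) (lam : β → β → Prop) (f : α → β) : Prop :=
  ∀ u v, κ u v → adjEq lam (f u) (f v)

/-- The digital interval `[0,m]_ℤ`. -/
def DigInt (m : ℕ) : Type := ↥(Set.Icc (0 : ℤ) (m : ℤ))

/-- 2-adjacency on the digital interval. -/
def intAdj (m : ℕ) : DigInt m → DigInt m → Prop := fun s t => adjZ s.1 t.1

/-- The left endpoint `0` of `[0,m]_ℤ`. -/
def pt0 (m : ℕ) : DigInt m := ⟨0, by simp⟩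

/-- The right endpoint `m` of `[0,m]_ℤ`. -/
def ptm (m : ℕ) : DigInt m := ⟨(m : ℤ), by simp⟩

/-- The digital path space `Y^{[0,m]_ℤ}`: `(2,κ)`-continuous maps `[0,m]_ℤ → Y`. -/
def DigPathSpace {Y : Type*} (κ : Y → Y → Prop) (m : ℕ) : Type _ :=
  {α : DigInt m → Y // DigCont (intAdj m) κ α}

/-- The function-space adjacency `κ_*` on the digital path space. -/
def pathAdj {Y : Type*} (κ : Y → Y → Prop) (m : ℕ) :
    DigPathSpace κ m → DigPathSpace κ m → Prop :=
  fun α β => ∀ s t, adjEq (intAdj m) s t → adjEq κ (α.1 s) (β.1 t)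

/-- The product adjacency on `Y × Z`. -/
def prodAdj {Y Z : Type*} (κ : Y → Y → Prop) (lam : Z → Z → Prop) :
    Y × Z → Y × Z → Prop :=
  fun p q => p ≠ q ∧ adjEq κ p.1 q.1 ∧ adjEq lam p.2 q.2

/-- Digital (`κ`-)connectedness: any two points are joined by a digital path. -/
def DigConnected {Y : Type*} (κ : Y → Y → Prop) : Prop :=
  ∀ y z : Y, ∃ m : ℕ, ∃ α : DigPathSpace κ m, α.1 (pt0 m) = y ∧ α.1 (ptm m) = z

/-- Digital homotopy of `(κ,λ)`-continuous maps. -/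
def DigHomotopic {Y Z : Type*} (κ : Y → Y → Prop) (lam : Z → Z → Prop) (f g : Y → Z) : Prop :=
  ∃ m : ℕ, ∃ G : Y × DigInt m → Z,
    (∀ y, G (y, pt0 m) = f y) ∧ (∀ y, G (y, ptm m) = g y) ∧
    (∀ t, DigCont κ lam fun y => G (y, t)) ∧
    (∀ y, DigCont (intAdj m) lam fun t => G (y, t))

/-- Digital `κ`-contractibility: the identity is digitally homotopic to a constant map. -/
def DigContractible {Y : Type*} (κ : Y → Y → Prop) : Prop :=
  ∃ y0 : Y, DigHomotopic κ κ id fun _ => y0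

/-- The map `π_g : Y^{[0,m]_ℤ} → Y × Z`, `α ↦ (α(0), g(α(m)))`. -/
def piMap {Y Z : Type*} (κ : Y → Y → Prop) (g : Y → Z) (m : ℕ)
    (α : DigPathSpace κ m) : Y × Z :=
  (α.1 (pt0 m), g (α.1 (ptm m)))

/-- The digital Schwarz genus of `q : A → B` is at most `l`: there is a cover of `B` by `l`
sets, each admitting a digitally continuous section of `q`. -/
def GenusLE {A B : Type*} (κA : A → A → Prop) (κB : B → B → Prop) (q : A → B) (l : ℕ) : Prop :=
  ∃ W : Fin l → Set B, (∀ b, ∃ i, b ∈ W i) ∧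
    ∀ i, ∃ s : ↥(W i) → A, DigCont (subAdj κB (W i)) κA s ∧ ∀ b : ↥(W i), q (s b) = b.1

/-- The digital Schwarz genus of `q : A → B`. -/
noncomputable def digGenus {A B : Type*} (κA : A → A → Prop) (κB : B → B → Prop)
    (q : A → B) : ℕ :=
  sInf {l | GenusLE κA κB q l}

/-- The digital topological complexity `TC(g)^{κ,λ}` of a digital map `g : (Y,κ) → (Z,λ)`:
the minimum over positive `m` of the digital Schwarz genus of `π_g`. -/
noncomputable def digTCmap {Y Z : Type*} (κ : Y → Y → Prop) (lam : Z → Z → Prop)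
    (g : Y → Z) : ℕ :=
  sInf {c | ∃ m : ℕ, 0 < m ∧ c = digGenus (pathAdj κ m) (prodAdj κ lam) (piMap κ g m)}

/-- The digital topological complexity `TC(Y,κ)`: the minimum over positive `m` of the
digital Schwarz genus of `π : Y^{[0,m]_ℤ} → Y × Y`, `α ↦ (α(0), α(m))`. -/
noncomputable def digTC {Y : Type*} (κ : Y → Y → Prop) : ℕ :=
  sInf {c | ∃ m : ℕ, 0 < m ∧ c = digGenus (pathAdj κ m) (prodAdj κ κ)
      (fun α : DigPathSpace κ m => (α.1 (pt0 m), α.1 (ptm m)))}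

/-- The digital LS-category of `(X,μ)` is at most `l`: `X` is covered by `l` sets whose
inclusions are digitally homotopic to constant maps. -/
def DigCatLE {X : Type*} (μ : X → X → Prop) (l : ℕ) : Prop :=
  ∃ V : Fin l → Set X, (∀ x, ∃ i, x ∈ V i) ∧
    ∀ i, ∃ x0 : X, DigHomotopic (subAdj μ (V i)) μ (fun v => v.1) fun _ => x0

/-- The digital LS-category `cat_μ(X)`. -/
noncomputable def digCat {X : Type*} (μ : X → X → Prop) : ℕ := sInf {l | DigCatLE μ l}

/-- The digital homotopy lifting property of `g : (Y,κ) → (Z,λ)` w.r.t. `(A,ρ)`. -/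
def HLP {A Y Z : Type*} (ρ : A → A → Prop) (κ : Y → Y → Prop) (lam : Z → Z → Prop)
    (g : Y → Z) : Prop :=
  ∀ f : A → Y, DigCont ρ κ f →
    ∀ (m : ℕ) (H : A × DigInt m → Z),
      (∀ t, DigCont ρ lam fun a => H (a, t)) →
      (∀ a, DigCont (intAdj m) lam fun t => H (a, t)) →
      (∀ a, H (a, pt0 m) = g (f a)) →
      ∃ HT : A × DigInt m → Y,
        (∀ t, DigCont ρ κ fun a => HT (a, t)) ∧
        (∀ a, DigCont (intAdj m) κ fun t => HT (a, t)) ∧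
        (∀ a, HT (a, pt0 m) = f a) ∧
        ∀ x, g (HT x) = H x

/-- A digital fibration: a digitally continuous map with the digital homotopy lifting
property with respect to every digital image (i.e. every subset of some `ℤ^p` with a
`c_q`-adjacency). -/
def DigFibration {Y Z : Type*} (κ : Y → Y → Prop) (lam : Z → Z → Prop) (g : Y → Z) : Prop :=
  DigCont κ lam g ∧
    ∀ (p q : ℕ), 1 ≤ q → q ≤ p → ∀ A : Set (Fin p → ℤ),
      HLP (subAdj (clAdj p q) A) κ lam g

/-- Digitally fiber homotopic maps `h k : (T,ρ) → (Y,κ)` over a fibration `g : Y → Z`. -/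
def DigFiberHomotopic {T Y Z : Type*} (ρ : T → T → Prop) (κ : Y → Y → Prop)
    (g : Y → Z) (h k : T → Y) : Prop :=
  ∃ m : ℕ, ∃ G : T × DigInt m → Y,
    (∀ y, G (y, pt0 m) = h y) ∧ (∀ y, G (y, ptm m) = k y) ∧
    (∀ t, DigCont ρ κ fun y => G (y, t)) ∧
    (∀ y, DigCont (intAdj m) κ fun t => G (y, t)) ∧
    ∀ y t, g (G (y, t)) = g (h y)

/-- Digital fiber homotopy equivalence of two digital fibrations over the same base. -/
def DigFHE {Y₁ Y₂ Z : Type*} (κ₁ : Y₁ → Y₁ → Prop) (κ₂ : Y₂ → Y₂ → Prop)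
    (g₁ : Y₁ → Z) (g₂ : Y₂ → Z) : Prop :=
  ∃ h : Y₁ → Y₂, ∃ k : Y₂ → Y₁, DigCont κ₁ κ₂ h ∧ DigCont κ₂ κ₁ k ∧
    DigFiberHomotopic κ₁ κ₁ g₁ (k ∘ h) id ∧ DigFiberHomotopic κ₂ κ₂ g₂ (h ∘ k) id

/-- A digital isomorphism: a digitally continuous map with a digitally continuous
two-sided inverse. -/
def DigIso {A B : Type*} (κA : A → A → Prop) (κB : B → B → Prop) (f : A → B) : Prop :=
  DigCont κA κB f ∧ ∃ h : B → A, DigCont κB κA h ∧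
    Function.LeftInverse h f ∧ Function.RightInverse h f

/-- Digitally isomorphic digital images. -/
def DigIsomorphic {A B : Type*} (κA : A → A → Prop) (κB : B → B → Prop) : Prop :=
  ∃ f : A → B, DigIso κA κB f

/-- The adjacency induced on `g⁻¹(S)` from `(Y,κ)`. -/
def fiberAdj {Y Z : Type*} (κ : Y → Y → Prop) (g : Y → Z) (S : Set Z) :
    {y : Y // g y ∈ S} → {y : Y // g y ∈ S} → Prop :=
  fun u v => κ u.1 v.1

/-- A digital fiber bundle `(Y, g, Z, T)`: `g` is a continuous surjection onto a connected
image `Z`, all fibers are digitally isomorphic to `T`, and `g` is locally trivial over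
connected subsets of `Z`. -/
def DigFiberBundle {Y Z T : Type*} (κ : Y → Y → Prop) (lam : Z → Z → Prop)
    (ρ : T → T → Prop) (g : Y → Z) : Prop :=
  Function.Surjective g ∧ DigCont κ lam g ∧ DigConnected lam ∧
  (∀ z : Z, DigIsomorphic (fiberAdj κ g ({z} : Set Z)) ρ) ∧
  ∀ z : Z, ∃ V : Set Z, z ∈ V ∧ DigConnected (subAdj lam V) ∧
    ∃ φ : {y : Y // g y ∈ V} → ↥V × T,
      DigIso (fiberAdj κ g V) (prodAdj (subAdj lam V) ρ) φ ∧
      ∀ y, ((φ y).1 : Z) = g y.1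


lemma adjEq_int_of_abs_le {m : ℕ} (s t : DigInt m) (h : |s.1 - t.1| ≤ 1) :
    adjEq (intAdj m) s t := by
  by_cases he : s.1 = t.1
  · exact Or.inl (Subtype.ext he)
  · refine Or.inr ?_
    show |s.1 - t.1| = 1
    rcases abs_le.mp h with ⟨h1, h2⟩
    rw [abs_eq (by norm_num : (0:ℤ) ≤ 1)]
    omega

lemma abs_le_of_adjEq_int {m : ℕ} {s t : DigInt m} (h : adjEq (intAdj m) s t) :
    |s.1 - t.1| ≤ 1 := by
  rcases h with h | h
  · simp [h]
  · exact le_of_eq h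

lemma pathApp {Y : Type*} {κ : Y → Y → Prop} {m : ℕ} (α : DigPathSpace κ m)
    (u v : DigInt m) (h : |u.1 - v.1| ≤ 1) : adjEq κ (α.1 u) (α.1 v) := by
  rcases adjEq_int_of_abs_le u v h with h' | h'
  · exact Or.inl (by rw [h'])
  · exact α.2 u v h'

lemma abs_min_sub_min_le (a b c d : ℤ) (h1 : |a - c| ≤ 1) (h2 : |b - d| ≤ 1) :
    |min a b - min c d| ≤ 1 := by
  rw [abs_le] at h1 h2 ⊢
  omega

theorem pathSpace_contractible_general {Y : Type*} (κ : Y → Y → Prop)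
    (hc : DigContractible κ) (m : ℕ) : DigContractible (pathAdj κ m) := by
  classical
  obtain ⟨y0, M, G, hG0, hGM, hGt, hGy⟩ := hc
  have Gapp : ∀ (y : Y) (u v : DigInt M), |u.1 - v.1| ≤ 1 →
      adjEq κ (G (y, u)) (G (y, v)) := by
    intro y u v h
    rcases adjEq_int_of_abs_le u v h with h' | h'
    · exact Or.inl (by rw [h'])
    · exact hGy y u v h'
  have hsmem : ∀ (s : DigInt m) (t : DigInt (m + M + 1)), t.1 ≤ (m:ℤ) →
      min s.1 ((m:ℤ) - t.1) ∈ Set.Icc (0:ℤ) (m:ℤ) := by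
    intro s t ht
    have hs := s.2
    have ht2 := t.2
    simp only [Set.mem_Icc] at hs ht2 ⊢
    omega
  have htmem : ∀ (t : DigInt (m + M + 1)), ¬ t.1 ≤ (m:ℤ) →
      t.1 - (m:ℤ) - 1 ∈ Set.Icc (0:ℤ) (M:ℤ) := by
    intro t ht
    have ht2 := t.2
    simp only [Set.mem_Icc] at ht2 ⊢
    push_cast at ht2
    omega
  let F : DigPathSpace κ m × DigInt (m + M + 1) → DigPathSpace κ m := fun p =>
    if ht : p.2.1 ≤ (m:ℤ) then
      ⟨fun s => p.1.1 ⟨min s.1 ((m:ℤ) - p.2.1), hsmem s p.2 ht⟩, by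
        intro s s' hss
        refine pathApp p.1 _ _ ?_
        have h1 : |s.1 - s'.1| = 1 := hss
        exact abs_min_sub_min_le _ _ _ _ (le_of_eq h1) (by simp)⟩
    else
      ⟨fun _ => G (p.1.1 (pt0 m), ⟨p.2.1 - (m:ℤ) - 1, htmem p.2 ht⟩),
        fun _ _ _ => Or.inl rfl⟩
  refine ⟨⟨fun _ => y0, fun _ _ _ => Or.inl rfl⟩, m + M + 1, F, ?_, ?_, ?_, ?_⟩
  · -- F (α, 0) = α
    intro α
    have h0 : ((pt0 (m + M + 1)).1 : ℤ) ≤ (m:ℤ) := by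
      show (0:ℤ) ≤ (m:ℤ); positivity
    simp only [F, dif_pos h0]
    apply Subtype.ext
    funext s
    simp only [id]
    refine congrArg α.1 (Subtype.ext ?_)
    have hs := s.2
    simp only [Set.mem_Icc] at hs
    show min s.1 ((m:ℤ) - (pt0 (m + M + 1)).1) = s.1
    have h00 : ((pt0 (m + M + 1)).1 : ℤ) = 0 := rfl
    rw [h00]
    omega
  · -- F (α, m+M+1) = const y0
    intro α
    have hN : ¬ ((ptm (m + M + 1)).1 : ℤ) ≤ (m:ℤ) := by
      show ¬ (((m + M + 1 : ℕ):ℤ) ≤ (m:ℤ))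
      push_cast
      omega
    rw [show F (α, ptm (m + M + 1)) = _ from dif_neg hN]
    apply Subtype.ext
    funext s
    have e2 : (⟨(ptm (m + M + 1)).1 - (m:ℤ) - 1, htmem _ hN⟩ : DigInt M) = ptm M := by
      apply Subtype.ext
      show (((m + M + 1 : ℕ):ℤ)) - (m:ℤ) - 1 = ((M:ℕ):ℤ)
      push_cast
      ring
    rw [e2, hGM]
  · -- continuity in α
    intro t α β hab
    refine Or.inr ?_
    intro s s' hss
    have hs1 : |s.1 - s'.1| ≤ 1 := abs_le_of_adjEq_int hss
    by_cases ht : t.1 ≤ (m:ℤ)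
    · beta_reduce
      rw [show F (α, t) = _ from dif_pos ht, show F (β, t) = _ from dif_pos ht]
      exact hab _ _ (adjEq_int_of_abs_le _ _
        (abs_min_sub_min_le _ _ _ _ hs1 (by simp)))
    · beta_reduce
      rw [show F (α, t) = _ from dif_neg ht, show F (β, t) = _ from dif_neg ht]
      have h0 : adjEq κ (α.1 (pt0 m)) (β.1 (pt0 m)) := hab _ _ (Or.inl rfl)
      rcases h0 with h | h
      · exact Or.inl (by rw [h])
      · exact hGt _ _ _ h
  · -- continuity in t
    intro α t t' htt
    refine Or.inr ?_
    intro s s' hss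
    have h1 : |t.1 - t'.1| = 1 := htt
    rcases abs_le.mp h1.le with ⟨h1a, h1b⟩
    have hs1 : |s.1 - s'.1| ≤ 1 := abs_le_of_adjEq_int hss
    have hsm := s.2
    have hsm' := s'.2
    simp only [Set.mem_Icc] at hsm hsm'
    by_cases ht : t.1 ≤ (m:ℤ) <;> by_cases ht' : t'.1 ≤ (m:ℤ)
    · beta_reduce
      rw [show F (α, t) = _ from dif_pos ht, show F (α, t') = _ from dif_pos ht']
      dsimp only
      refine pathApp α _ _ (abs_min_sub_min_le _ _ _ _ hs1 ?_)
      rw [abs_le]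
      omega
    · -- t ≤ m < t' : t = m, t' = m + 1
      beta_reduce
      rw [show F (α, t) = _ from dif_pos ht, show F (α, t') = _ from dif_neg ht']
      have e1 : α.1 ⟨min s.1 ((m:ℤ) - t.1), hsmem s t ht⟩ = α.1 (pt0 m) :=
        congrArg α.1 (Subtype.ext (by show min s.1 ((m:ℤ) - t.1) = (0:ℤ); omega))
      have e2 : (⟨t'.1 - (m:ℤ) - 1, htmem t' ht'⟩ : DigInt M) = pt0 M := by
        apply Subtype.ext
        show t'.1 - (m:ℤ) - 1 = (0:ℤ)
        omega
      refine Or.inl ?_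
      rw [e2, hG0, e1]
      rfl
    · -- t' ≤ m < t : t' = m, t = m + 1
      beta_reduce
      rw [show F (α, t) = _ from dif_neg ht, show F (α, t') = _ from dif_pos ht']
      have e1 : α.1 ⟨min s'.1 ((m:ℤ) - t'.1), hsmem s' t' ht'⟩ = α.1 (pt0 m) :=
        congrArg α.1 (Subtype.ext (by show min s'.1 ((m:ℤ) - t'.1) = (0:ℤ); omega))
      have e2 : (⟨t.1 - (m:ℤ) - 1, htmem t ht⟩ : DigInt M) = pt0 M := by
        apply Subtype.ext
        show t.1 - (m:ℤ) - 1 = (0:ℤ)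
        omega
      refine Or.inl ?_
      rw [e2, hG0, e1]
      rfl
    · beta_reduce
      rw [show F (α, t) = _ from dif_neg ht, show F (α, t') = _ from dif_neg ht']
      refine Gapp _ _ _ ?_
      show |t.1 - (m:ℤ) - 1 - (t'.1 - (m:ℤ) - 1)| ≤ 1
      rw [abs_le]
      omega

/-- If a digital image `(Y,κ)` is κ-contractible, then for every positive
integer `m` the digital path space `Y^{[0,m]_ℤ}` with its function-space adjacency `κ_*`
is `κ_*`-contractible. -/
theorem digPathSpace_contractible (n l : ℕ) (hl1 : 1 ≤ l) (hln : l ≤ n)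
    (Y : Set (Fin n → ℤ)) (hc : DigContractible (subAdj (clAdj n l) Y))
    (m : ℕ) (hm : 0 < m) :
    DigContractible (pathAdj (subAdj (clAdj n l) Y) m) := by
  exact pathSpace_contractible_general _ hc m
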